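/- Let f : X → Y be a continuous surjection between compact Hausdorff spaces with the property that for every subcontinuum K of Y there exists a subcontinuum C of X with f(C) = K and f⁻¹(V) ⊆ C for every open V ⊆ Y with V ⊆ K. If Y is locally connected, then f is strongly monotone: the preimage of every subcontinuum of Y is connected. -/
import Mathlib

open Set

/-- The intersection of a directed family of nonempty compact preconnected sets in a
Hausdorff space is connected. -/
lemma isConnected_iInter_directed {Z : Type*} [TopologicalSpace Z] [T2Space Z]
    {ι : Type*} [Nonempty ι] {C : ι → Set Z} (hd : Directed (· ⊇ ·) C)
    (hne : ∀ i, (C i).Nonempty) (hcpt : ∀ i, IsCompact (C i))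
    (hconn : ∀ i, IsPreconnected (C i)) : IsConnected (⋂ i, C i) := by
  have hcl : ∀ i, IsClosed (C i) := fun i => (hcpt i).isClosed
  refine ⟨IsCompact.nonempty_iInter_of_directed_nonempty_isCompact_isClosed C hd hne hcpt hcl, ?_⟩
  rw [isPreconnected_closed_iff]
  intro t₁ t₂ ht₁ ht₂ hcover h1 h2
  by_contra hempty
  push_neg at hempty
  set S := ⋂ i, C i with hS
  have hScpt : IsCompact S := (hcpt (Classical.arbitrary ι)).of_isClosed_subset
    (isClosed_iInter hcl) (iInter_subset _ _)
  set A := S ∩ t₁ with hA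
  set B := S ∩ t₂ with hB
  have hAB : Disjoint A B := by
    rw [Set.disjoint_left]
    rintro x ⟨hxS, hx1⟩ ⟨-, hx2⟩
    have hxmem : x ∈ S ∩ (t₁ ∩ t₂) := ⟨hxS, hx1, hx2⟩
    rw [hempty] at hxmem
    exact hxmem
  have hAcpt : IsCompact A := hScpt.inter_right ht₁
  have hBcpt : IsCompact B := hScpt.inter_right ht₂
  obtain ⟨U, V, hU, hV, hAU, hBV, hUV⟩ :=
    SeparatedNhds.of_isCompact_isCompact_isClosed hAcpt hBcpt hBcpt.isClosed hAB
  -- some C i is contained in U ∪ V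
  have hSsub : S ⊆ U ∪ V := fun x hx => by
    rcases hcover hx with h | h
    · exact Or.inl (hAU ⟨hx, h⟩)
    · exact Or.inr (hBV ⟨hx, h⟩)
  have hexists : ∃ i, C i ⊆ U ∪ V := by
    by_contra hcon
    push_neg at hcon
    have hDne : ∀ i, (C i \ (U ∪ V)).Nonempty := by
      intro i
      obtain ⟨x, hx1, hx2⟩ := not_subset.mp (hcon i)
      exact ⟨x, hx1, hx2⟩
    have hDdir : Directed (· ⊇ ·) (fun i => C i \ (U ∪ V)) := by
      intro i j
      obtain ⟨k, hk1, hk2⟩ := hd i j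
      exact ⟨k, Set.diff_subset_diff_left hk1, Set.diff_subset_diff_left hk2⟩
    have := IsCompact.nonempty_iInter_of_directed_nonempty_isCompact_isClosed
      (fun i => C i \ (U ∪ V)) hDdir hDne
      (fun i => (hcpt i).diff (hU.union hV))
      (fun i => (hcl i).sdiff (hU.union hV))
    obtain ⟨x, hx⟩ := this
    simp only [Set.mem_iInter, Set.mem_diff] at hx
    have hxS : x ∈ S := Set.mem_iInter.mpr fun i => (hx i).1
    exact (hx (Classical.arbitrary ι)).2 (hSsub hxS)
  obtain ⟨i, hi⟩ := hexists
  obtain ⟨a, haS, hat⟩ := h1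
  obtain ⟨b, hbS, hbt⟩ := h2
  have hCU : (C i ∩ U).Nonempty :=
    ⟨a, Set.mem_iInter.mp haS i, hAU ⟨haS, hat⟩⟩
  have hCV : (C i ∩ V).Nonempty :=
    ⟨b, Set.mem_iInter.mp hbS i, hBV ⟨hbS, hbt⟩⟩
  obtain ⟨x, _, hxU, hxV⟩ := hconn i U V hU hV hi hCU hCV
  exact hUV.le_bot ⟨hxU, hxV⟩

theorem stmt_8 (X Y : Type*) [TopologicalSpace X] [CompactSpace X] [T2Space X]
    [TopologicalSpace Y] [CompactSpace Y] [T2Space Y] [LocallyConnectedSpace Y]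
    (f : X → Y) (hf : Continuous f) (hsurj : Function.Surjective f)
    (hlift : ∀ K : Set Y, IsClosed K → IsConnected K →
      ∃ C : Set X, IsClosed C ∧ IsConnected C ∧ f '' C = K ∧
        ∀ V : Set Y, IsOpen V → V ⊆ K → f ⁻¹' V ⊆ C) :
    ∀ K : Set Y, IsClosed K → IsConnected K → IsConnected (f ⁻¹' K) := by
  intro K hKcl hKconn
  obtain ⟨y₀, hy₀⟩ := hKconn.nonempty
  -- index type: open connected sets containing K
  set S : Set (Set Y) := {U | IsOpen U ∧ IsConnected U ∧ K ⊆ U} with hSdef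
  -- a canonical way to produce elements of S inside any open W ⊇ K
  have hmk : ∀ W : Set Y, IsOpen W → K ⊆ W → ∃ U ∈ S, U ⊆ W := by
    intro W hW hKW
    refine ⟨connectedComponentIn W y₀, ⟨hW.connectedComponentIn, ?_, ?_⟩,
      connectedComponentIn_subset W y₀⟩
    · exact (isConnected_connectedComponentIn_iff.mpr (hKW hy₀))
    · exact hKconn.isPreconnected.subset_connectedComponentIn hy₀ hKW
  have hSne : S.Nonempty := by
    obtain ⟨U, hU, _⟩ := hmk univ isOpen_univ (subset_univ K)
    exact ⟨U, hU⟩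
  haveI : Nonempty S := hSne.to_subtype
  -- for each U ∈ S, pick a lift of closure U
  have hpick : ∀ U : S, ∃ C : Set X, IsClosed C ∧ IsConnected C ∧ f '' C = closure (U : Set Y) ∧
      ∀ V : Set Y, IsOpen V → V ⊆ closure (U : Set Y) → f ⁻¹' V ⊆ C := by
    intro ⟨U, hUopen, hUconn, _⟩
    exact hlift (closure U) isClosed_closure hUconn.closure
  choose C hCcl hCconn hCim hCsub using hpick
  -- basic inclusions
  have hlow : ∀ U : S, f ⁻¹' K ⊆ C U := by
    intro U
    exact fun x hx => hCsub U (U : Set Y) U.2.1 subset_closure (U.2.2.2 hx)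
  have hupp : ∀ U : S, C U ⊆ f ⁻¹' closure (U : Set Y) := by
    intro U x hx
    have : f x ∈ f '' C U := ⟨x, hx, rfl⟩
    rwa [hCim U] at this
  -- the intersection of the C U equals f ⁻¹' K
  have hKinter : (⋂ U : S, C U) = f ⁻¹' K := by
    apply Subset.antisymm
    · intro x hx
      simp only [mem_iInter] at hx
      by_contra hxK
      -- f x ∉ K ; separate
      have : ∃ W : Set Y, IsOpen W ∧ K ⊆ W ∧ closure W ⊆ {f x}ᶜ := by
        have hop : IsOpen ({f x}ᶜ : Set Y) := isOpen_compl_singleton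
        exact normal_exists_closure_subset hKcl hop (fun y hy h => hxK (by rw [mem_singleton_iff] at h; rwa [h] at hy))
      obtain ⟨W, hWopen, hKW, hWcl⟩ := this
      obtain ⟨U, hUS, hUW⟩ := hmk W hWopen hKW
      have hx' := hupp ⟨U, hUS⟩ (hx ⟨U, hUS⟩)
      have : f x ∈ closure W := closure_mono hUW hx'
      exact hWcl this rfl
    · exact fun x hx => mem_iInter.mpr fun U => hlow U hx
  -- directedness
  have hdir : Directed (· ⊇ ·) C := by
    intro U₁ U₂
    obtain ⟨W, hWopen, hKW, hWcl⟩ :=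
      normal_exists_closure_subset hKcl (U₁.2.1.inter U₂.2.1)
        (subset_inter U₁.2.2.2 U₂.2.2.2)
    obtain ⟨U₃, hU₃S, hU₃W⟩ := hmk W hWopen hKW
    have key : ∀ U : S, closure W ⊆ (U : Set Y) → C ⟨U₃, hU₃S⟩ ⊆ C U := by
      intro U hcl'
      intro x hx
      have h1 : f x ∈ closure U₃ := hupp ⟨U₃, hU₃S⟩ hx
      have h2 : f x ∈ (U : Set Y) := hcl' (closure_mono hU₃W h1)
      exact hCsub U (U : Set Y) U.2.1 subset_closure h2
    exact ⟨⟨U₃, hU₃S⟩,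
      key U₁ (hWcl.trans inter_subset_left),
      key U₂ (hWcl.trans inter_subset_right)⟩
  have := isConnected_iInter_directed (C := C) hdir
    (fun U => by
      have h := hCconn U
      exact h.nonempty)
    (fun U => (hCcl U).isCompact)
    (fun U => (hCconn U).isPreconnected)
  rwa [hKinter] at this
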